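/- arXiv:1511.05469 — 2 statements merged into one kernel-verified Lean document; each statement's English description precedes it below -/
import Mathlib

section
/- For α₀ ∈ (0, 1/2) and β₀ ∈ (1.5, 1.5 + α₀), the derivative of f(x) = x^{β₀} sin(x^{-α₀}) (with f(0)=0) is Hölder continuous on [0,1] with some Hölder exponent δ ∈ (0, 1). -/
open Real

noncomputable def g1 (a b : ℝ) (x : ℝ) : ℝ :=
  b * x ^ (b-1) * Real.sin (x ^ (-a)) - a * x ^ (b-1-a) * Real.cos (x ^ (-a))

noncomputable def g2 (a b : ℝ) (x : ℝ) : ℝ :=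
  b*(b-1) * x^(b-2) * Real.sin (x^(-a)) - (a*b + a*(b-1-a)) * x^(b-2-a) * Real.cos (x^(-a))
    - a^2 * x^(b-2-2*a) * Real.sin (x^(-a))

lemma hd1 (a b x : ℝ) (hx : 0 < x) :
    HasDerivAt (fun x : ℝ => x ^ b * Real.sin (x ^ (-a))) (g1 a b x) x := by
  have h1 : HasDerivAt (fun x : ℝ => x ^ b) (b * x ^ (b-1)) x :=
    Real.hasDerivAt_rpow_const (Or.inl hx.ne')
  have h2 : HasDerivAt (fun x : ℝ => x ^ (-a)) ((-a) * x ^ (-a-1)) x :=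
    Real.hasDerivAt_rpow_const (Or.inl hx.ne')
  have h3 : HasDerivAt (fun x : ℝ => Real.sin (x ^ (-a)))
      (Real.cos (x ^ (-a)) * ((-a) * x ^ (-a-1))) x :=
    (Real.hasDerivAt_sin _).comp x h2
  have h4 := h1.mul h3
  refine h4.congr_deriv ?_
  have : x ^ b * x ^ (-a-1) = x ^ (b-1-a) := by
    rw [← Real.rpow_add hx]; ring_nf
  unfold g1
  rw [← this]; ring

lemma hd2 (a b x : ℝ) (hx : 0 < x) :
    HasDerivAt (g1 a b) (g2 a b x) x := by
  have h2 : HasDerivAt (fun x : ℝ => x ^ (-a)) ((-a) * x ^ (-a-1)) x :=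
    Real.hasDerivAt_rpow_const (Or.inl hx.ne')
  have hsin : HasDerivAt (fun x : ℝ => Real.sin (x ^ (-a)))
      (Real.cos (x ^ (-a)) * ((-a) * x ^ (-a-1))) x :=
    (Real.hasDerivAt_sin _).comp x h2
  have hcos : HasDerivAt (fun x : ℝ => Real.cos (x ^ (-a)))
      (-Real.sin (x ^ (-a)) * ((-a) * x ^ (-a-1))) x :=
    (Real.hasDerivAt_cos _).comp x h2
  have hp1 : HasDerivAt (fun x : ℝ => x ^ (b-1)) ((b-1) * x ^ (b-1-1)) x :=
    Real.hasDerivAt_rpow_const (Or.inl hx.ne')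
  have hp2 : HasDerivAt (fun x : ℝ => x ^ (b-1-a)) ((b-1-a) * x ^ (b-1-a-1)) x :=
    Real.hasDerivAt_rpow_const (Or.inl hx.ne')
  have h4 := ((hp1.mul hsin).const_mul b).sub ((hp2.mul hcos).const_mul a)
  refine (h4.congr_of_eventuallyEq (Filter.Eventually.of_forall fun t => ?_)).congr_deriv ?_
  · show g1 a b t = b * (t ^ (b-1) * Real.sin (t ^ (-a))) - a * (t ^ (b-1-a) * Real.cos (t ^ (-a))); unfold g1; ring
  have e1 : x ^ (b-1) * x ^ (-a-1) = x ^ (b-2-a) := by rw [← Real.rpow_add hx]; ring_nf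
  have e2 : x ^ (b-1-a) * x ^ (-a-1) = x ^ (b-2-2*a) := by rw [← Real.rpow_add hx]; ring_nf
  have e3 : x ^ (b-1-1) = x ^ (b-2) := by ring_nf
  unfold g2
  have e4 : x ^ (b-1-a-1) = x ^ (b-2-a) := by ring_nf
  rw [← e1, ← e2, ← e3, e4.trans e1.symm]; ring

lemma habs (c e x t : ℝ) (hc : 0 ≤ c) (hx : 0 ≤ x) (ht : |t| ≤ 1) :
    |c * x ^ e * t| ≤ c * x ^ e := by
  rw [abs_mul, abs_mul, abs_of_nonneg hc, abs_of_nonneg (Real.rpow_nonneg hx e)]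
  calc c * x ^ e * |t| ≤ c * x ^ e * 1 := by
        apply mul_le_mul_of_nonneg_left ht; positivity
    _ = c * x ^ e := mul_one _

lemma bound_g1 (a b x : ℝ) (ha : 0 ≤ a) (hb : 1 + a ≤ b) (hx : 0 < x) (hx1 : x ≤ 1) :
    |g1 a b x| ≤ (a + b) * x ^ (b-1-a) := by
  have hb0 : (0:ℝ) ≤ b := by linarith
  have h1 : |b * x ^ (b-1) * Real.sin (x ^ (-a))| ≤ b * x ^ (b-1) :=
    habs _ _ _ _ hb0 hx.le (Real.abs_sin_le_one _)
  have h2 : |a * x ^ (b-1-a) * Real.cos (x ^ (-a))| ≤ a * x ^ (b-1-a) :=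
    habs _ _ _ _ ha hx.le (Real.abs_cos_le_one _)
  have h3 : x ^ (b-1) ≤ x ^ (b-1-a) :=
    Real.rpow_le_rpow_of_exponent_ge hx hx1 (by linarith)
  calc |g1 a b x| ≤ |b * x ^ (b-1) * Real.sin (x ^ (-a))|
        + |a * x ^ (b-1-a) * Real.cos (x ^ (-a))| := by
        unfold g1; exact abs_sub _ _
    _ ≤ b * x ^ (b-1) + a * x ^ (b-1-a) := add_le_add h1 h2
    _ ≤ b * x ^ (b-1-a) + a * x ^ (b-1-a) := by nlinarith
    _ = (a + b) * x ^ (b-1-a) := by ring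

lemma bound_g2 (a b x : ℝ) (ha : 0 ≤ a) (hb : 1 + a ≤ b) (hx : 0 < x) (hx1 : x ≤ 1) :
    |g2 a b x| ≤ (b*(b-1) + (a*b + a*(b-1-a)) + a^2) * x ^ (b-2-2*a) := by
  have hb0 : (0:ℝ) ≤ b*(b-1) := by nlinarith
  have hc0 : (0:ℝ) ≤ a*b + a*(b-1-a) := by nlinarith
  have h1 : |b*(b-1) * x ^ (b-2) * Real.sin (x ^ (-a))| ≤ b*(b-1) * x ^ (b-2) :=
    habs _ _ _ _ hb0 hx.le (Real.abs_sin_le_one _)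
  have h2 : |(a*b + a*(b-1-a)) * x ^ (b-2-a) * Real.cos (x ^ (-a))|
      ≤ (a*b + a*(b-1-a)) * x ^ (b-2-a) :=
    habs _ _ _ _ hc0 hx.le (Real.abs_cos_le_one _)
  have h3 : |a^2 * x ^ (b-2-2*a) * Real.sin (x ^ (-a))| ≤ a^2 * x ^ (b-2-2*a) :=
    habs _ _ _ _ (sq_nonneg a) hx.le (Real.abs_sin_le_one _)
  have e1 : x ^ (b-2) ≤ x ^ (b-2-2*a) :=
    Real.rpow_le_rpow_of_exponent_ge hx hx1 (by linarith)
  have e2 : x ^ (b-2-a) ≤ x ^ (b-2-2*a) :=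
    Real.rpow_le_rpow_of_exponent_ge hx hx1 (by linarith)
  calc |g2 a b x| ≤ |b*(b-1) * x^(b-2) * Real.sin (x^(-a))
          - (a*b + a*(b-1-a)) * x^(b-2-a) * Real.cos (x^(-a))|
        + |a^2 * x^(b-2-2*a) * Real.sin (x^(-a))| := by
        unfold g2; exact abs_sub _ _
    _ ≤ |b*(b-1) * x^(b-2) * Real.sin (x^(-a))|
        + |(a*b + a*(b-1-a)) * x^(b-2-a) * Real.cos (x^(-a))|
        + |a^2 * x^(b-2-2*a) * Real.sin (x^(-a))| := by
        exact add_le_add (abs_sub _ _) le_rfl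
    _ ≤ b*(b-1) * x^(b-2) + (a*b + a*(b-1-a)) * x^(b-2-a) + a^2 * x^(b-2-2*a) := by
        exact add_le_add (add_le_add h1 h2) h3
    _ ≤ (b*(b-1) + (a*b + a*(b-1-a)) + a^2) * x ^ (b-2-2*a) := by nlinarith

lemma mvt_g1 (a b y x : ℝ) (ha : 0 ≤ a) (hb : 1 + a ≤ b) (hb2 : b ≤ 2 + 2*a)
    (hy : 0 < y) (hyx : y ≤ x) (hx1 : x ≤ 1) :
    |g1 a b x - g1 a b y|
      ≤ ((b*(b-1) + (a*b + a*(b-1-a)) + a^2) * y ^ (b-2-2*a)) * (x - y) := by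
  have key := Convex.norm_image_sub_le_of_norm_hasDerivWithin_le
    (f := g1 a b) (f' := g2 a b) (s := Set.Icc y x)
    (C := (b*(b-1) + (a*b + a*(b-1-a)) + a^2) * y ^ (b-2-2*a))
    (fun t ht => ((hd2 a b t (lt_of_lt_of_le hy ht.1)).hasDerivWithinAt))
    (fun t ht => ?_) (convex_Icc y x) (Set.left_mem_Icc.2 hyx) (Set.right_mem_Icc.2 hyx)
  · rw [Real.norm_eq_abs] at key
    calc |g1 a b x - g1 a b y| ≤ _ * ‖x - y‖ := key
      _ = _ := by rw [Real.norm_eq_abs, abs_of_nonneg (by linarith)]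
  · have ht0 : 0 < t := lt_of_lt_of_le hy ht.1
    have ht1 : t ≤ 1 := le_trans ht.2 hx1
    rw [Real.norm_eq_abs]
    calc |g2 a b t| ≤ (b*(b-1) + (a*b + a*(b-1-a)) + a^2) * t ^ (b-2-2*a) :=
          bound_g2 a b t ha hb ht0 ht1
      _ ≤ (b*(b-1) + (a*b + a*(b-1-a)) + a^2) * y ^ (b-2-2*a) := by
          apply mul_le_mul_of_nonneg_left _ (by nlinarith)
          exact Real.rpow_le_rpow_of_nonpos hy ht.1 (by linarith)

lemma deriv_f_pos (a b : ℝ) (f : ℝ → ℝ)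
    (hf : ∀ x : ℝ, f x = if 0 < x then x ^ b * Real.sin (x ^ (-a)) else 0)
    (x : ℝ) (hx : 0 < x) : deriv f x = g1 a b x := by
  have hev : f =ᶠ[nhds x] fun t => t ^ b * Real.sin (t ^ (-a)) := by
    filter_upwards [Ioi_mem_nhds hx] with t ht
    rw [hf t]; exact if_pos ht
  exact ((hd1 a b x hx).congr_of_eventuallyEq hev).deriv

lemma deriv_f_zero (a b : ℝ) (hb : 1 < b) (f : ℝ → ℝ)
    (hf : ∀ x : ℝ, f x = if 0 < x then x ^ b * Real.sin (x ^ (-a)) else 0) :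
    deriv f 0 = 0 := by
  have hf0 : f 0 = 0 := by rw [hf 0]; simp
  have h0 : HasDerivAt f 0 0 := by
    rw [hasDerivAt_iff_tendsto_slope]
    apply squeeze_zero_norm (a := fun t : ℝ => |t| ^ (b-1))
    · intro t
      rw [Real.norm_eq_abs, slope_def_field, hf0, sub_zero, sub_zero, div_eq_mul_inv]
      rcases le_or_gt t 0 with h | h
      · rw [hf t, if_neg (not_lt.2 h)]
        simp [Real.rpow_nonneg (abs_nonneg t)]
      · rw [hf t, if_pos h, abs_mul, abs_mul, abs_of_pos h,
          abs_of_nonneg (Real.rpow_nonneg h.le b), abs_inv, abs_of_pos h]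
        have : t ^ b * |Real.sin (t ^ (-a))| * t⁻¹ ≤ t ^ b * 1 * t⁻¹ := by
          apply mul_le_mul_of_nonneg_right _ (by positivity)
          exact mul_le_mul_of_nonneg_left (Real.abs_sin_le_one _) (by positivity)
        apply this.trans
        rw [mul_one]
        have : t ^ b * t⁻¹ = t ^ (b-1) := by
          rw [Real.rpow_sub h, Real.rpow_one, div_eq_mul_inv]
        rw [this]
    · have hc : ContinuousAt (fun t : ℝ => |t| ^ (b-1)) 0 :=
        (Real.continuousAt_rpow_const _ _ (Or.inr (by linarith))).comp
          continuous_abs.continuousAt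
      have := hc.tendsto
      simp only [abs_zero, Real.zero_rpow (by linarith : b - 1 ≠ 0)] at this
      exact this.mono_left nhdsWithin_le_nhds
  exact h0.deriv

/-- for α₀ ∈ (0,1/2), β₀ ∈ (1.5, 1.5+α₀), the derivative of
f(x) = x^{β₀} sin(x^{-α₀}) (f = 0 for x ≤ 0) is Hölder continuous on [0,1]
with some exponent δ ∈ (0,1). -/
theorem stmt1 (α₀ β₀ : ℝ) (hα : α₀ ∈ Set.Ioo (0:ℝ) (1/2))
    (hβ : β₀ ∈ Set.Ioo (1.5:ℝ) (1.5 + α₀))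
    (f : ℝ → ℝ)
    (hf : ∀ x : ℝ, f x = if 0 < x then x ^ β₀ * Real.sin (x ^ (-α₀)) else 0) :
    ∃ δ ∈ Set.Ioo (0:ℝ) 1, ∃ C > 0,
      ∀ x ∈ Set.Icc (0:ℝ) 1, ∀ y ∈ Set.Icc (0:ℝ) 1,
        |deriv f x - deriv f y| ≤ C * |x - y| ^ δ := by
  obtain ⟨ha0, ha2⟩ := hα
  obtain ⟨hb1, hb2⟩ := hβ
  set a := α₀
  set b := β₀
  have hb1' : (1.5:ℝ) = 3/2 := by norm_num
  have h1a : 1 + a ≤ b := by rw [hb1'] at hb1; linarith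
  have hγ0 : 0 < b - 1 - a := by rw [hb1'] at hb1; linarith
  have hγhalf : b - 1 - a < 1/2 := by rw [hb1'] at hb2; linarith
  have hbneg : b - 2 - 2*a < 0 := by linarith
  have h1apos : (0:ℝ) < 1 + a := by linarith
  set γ := b - 1 - a with hγdef
  set δ := γ / (1 + a) with hδdef
  set K := b*(b-1) + (a*b + a*(b-1-a)) + a^2 with hKdef
  have hK0 : 0 ≤ K := by nlinarith
  set C := K + 3*(a+b) + 1 with hCdef
  have hC0 : 0 < C := by nlinarith
  have hδ0 : 0 < δ := div_pos hγ0 h1apos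
  have hδγ : δ ≤ γ := div_le_self hγ0.le (by linarith)
  have hδ1 : δ < 1 := by
    rw [hδdef, div_lt_one h1apos]; linarith
  have hγ1 : γ ≤ 1 := by linarith
  refine ⟨δ, ⟨hδ0, hδ1⟩, C, hC0, ?_⟩
  -- suffices: the case y ≤ x
  suffices key : ∀ x ∈ Set.Icc (0:ℝ) 1, ∀ y ∈ Set.Icc (0:ℝ) 1, y ≤ x →
      |deriv f x - deriv f y| ≤ C * |x - y| ^ δ by
    intro x hx y hy
    rcases le_total y x with h | h
    · exact key x hx y hy h
    · rw [abs_sub_comm (deriv f x), abs_sub_comm x y]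
      exact key y hy x hx h
  intro x hx y hy hyx
  rcases eq_or_lt_of_le hyx with rfl | hlt
  · simp [Real.zero_rpow hδ0.ne']
  have hh0 : 0 < x - y := by linarith
  have hh1 : x - y ≤ 1 := by
    have := hx.2; have := hy.1; linarith
  have habsxy : |x - y| = x - y := abs_of_pos hh0
  set h := x - y with hhdef
  have hx1 : x ≤ 1 := hx.2
  have hx0 : 0 < x := lt_of_le_of_lt hy.1 hlt
  -- power of h facts
  have hr0 : 0 < h ^ (1/(1+a)) := Real.rpow_pos_of_pos hh0 _
  have hrδ : (h ^ (1/(1+a))) ^ γ = h ^ δ := by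
    rw [← Real.rpow_mul hh0.le]
    congr 1
    rw [hδdef]; ring
  have hderiv_x : deriv f x = g1 a b x := deriv_f_pos a b f hf x hx0
  rcases eq_or_lt_of_le hy.1 with hy0 | hy0
  · -- y = 0
    have hy0' : y = 0 := hy0.symm
    subst hy0'
    have hxh : h = x := by rw [hhdef]; ring
    rw [hderiv_x, deriv_f_zero a b (by linarith) f hf, sub_zero, habsxy, hxh]
    calc |g1 a b x| ≤ (a + b) * x ^ γ := bound_g1 a b x ha0.le h1a hx0 hx1
      _ ≤ (a + b) * x ^ δ := by
          apply mul_le_mul_of_nonneg_left _ (by linarith)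
          exact Real.rpow_le_rpow_of_exponent_ge hx0 hx1 hδγ
      _ ≤ C * x ^ δ := by
          apply mul_le_mul_of_nonneg_right _ (Real.rpow_nonneg hx0.le δ)
          rw [hCdef]; linarith
  · -- 0 < y
    have hderiv_y : deriv f y = g1 a b y := deriv_f_pos a b f hf y hy0
    rw [hderiv_x, hderiv_y, habsxy]
    have hhδ : (0:ℝ) ≤ h ^ δ := Real.rpow_nonneg hh0.le δ
    rcases le_total y (h ^ (1/(1+a))) with hc | hc
    · -- far case : use bound on g1 directly
      have by1 : |g1 a b y| ≤ (a + b) * y ^ γ := bound_g1 a b y ha0.le h1a hy0 (by linarith)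
      have bx1 : |g1 a b x| ≤ (a + b) * x ^ γ := bound_g1 a b x ha0.le h1a hx0 hx1
      have hyγ : y ^ γ ≤ h ^ δ := by
        rw [← hrδ]
        exact Real.rpow_le_rpow hy0.le hc hγ0.le
      have hhh : h ≤ h ^ (1/(1+a)) := by
        nth_rewrite 1 [← Real.rpow_one h]
        apply Real.rpow_le_rpow_of_exponent_ge hh0 hh1
        rw [div_le_one h1apos]; linarith
      have hxle : x ≤ 2 * h ^ (1/(1+a)) := by
        have : x = y + h := by rw [hhdef]; ring
        rw [this]; linarith
      have hxγ : x ^ γ ≤ 2 * h ^ δ := by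
        calc x ^ γ ≤ (2 * h ^ (1/(1+a))) ^ γ :=
              Real.rpow_le_rpow hx0.le hxle hγ0.le
          _ = 2 ^ γ * (h ^ (1/(1+a))) ^ γ := Real.mul_rpow (by norm_num) hr0.le
          _ ≤ 2 * (h ^ (1/(1+a))) ^ γ := by
              apply mul_le_mul_of_nonneg_right _ (Real.rpow_nonneg hr0.le γ)
              calc (2:ℝ) ^ γ ≤ 2 ^ (1:ℝ) :=
                    Real.rpow_le_rpow_of_exponent_le (by norm_num) hγ1
                _ = 2 := Real.rpow_one 2
          _ = 2 * h ^ δ := by rw [hrδ]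
      calc |g1 a b x - g1 a b y| ≤ |g1 a b x| + |g1 a b y| := abs_sub _ _
        _ ≤ (a + b) * x ^ γ + (a + b) * y ^ γ := add_le_add bx1 by1
        _ ≤ (a + b) * (2 * h ^ δ) + (a + b) * (h ^ δ) :=
            add_le_add (mul_le_mul_of_nonneg_left hxγ (by linarith))
              (mul_le_mul_of_nonneg_left hyγ (by linarith))
        _ = 3 * (a + b) * h ^ δ := by ring
        _ ≤ C * h ^ δ := by
            apply mul_le_mul_of_nonneg_right _ hhδ
            rw [hCdef]; linarith
    · -- near case : mean value theorem
      have hmvt := mvt_g1 a b y x ha0.le h1a (by linarith) hy0 hyx hx1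
      have hyexp : y ^ (b-2-2*a) ≤ h ^ (δ - 1) := by
        have e1 : (h ^ (1/(1+a))) ^ (b-2-2*a) = h ^ (δ - 1) := by
          rw [← Real.rpow_mul hh0.le]
          congr 1
          rw [hδdef, hγdef]
          field_simp
          ring
        rw [← e1]
        exact Real.rpow_le_rpow_of_nonpos hr0 hc hbneg.le
      have hst : h ^ (δ - 1) * h = h ^ δ := by
        nth_rewrite 2 [← Real.rpow_one h]
        rw [← Real.rpow_add hh0]
        ring_nf
      calc |g1 a b x - g1 a b y| ≤ (K * y ^ (b-2-2*a)) * h := hmvt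
        _ ≤ (K * h ^ (δ-1)) * h := by
            apply mul_le_mul_of_nonneg_right _ hh0.le
            exact mul_le_mul_of_nonneg_left hyexp hK0
        _ = K * h ^ δ := by rw [mul_assoc, hst]
        _ ≤ C * h ^ δ := by
            apply mul_le_mul_of_nonneg_right _ hhδ
            rw [hCdef]; linarith
end

section
/- If f ∈ C^l_{pol,0} with l > D, then f ∈ L¹(ℝ^D) ∩ L²(ℝ^D), and its convolution with the heat kernel G_ν(t,·) satisfies |f ∗ G_ν(t,·)(x)| ≤ c'/(1 + |x|^{l-μ}) for |x| ≥ 1, for any μ ∈ (0,1) and some constant c' depending on μ, f, uniformly in t ∈ (0, 1] and ν ∈ (0,1]. -/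
open Real MeasureTheory

lemma stmt16_gauss_integrable (D : ℕ) {b : ℝ} (hb : 0 < b) :
    Integrable (fun v : EuclideanSpace ℝ (Fin D) => rexp (-b * ‖v‖^2)) := by
  have h := (GaussianFourier.integrable_cexp_neg_mul_sq_norm_add (V := EuclideanSpace ℝ (Fin D))
    (b := (b : ℂ)) (by simpa using hb) 0 (0 : EuclideanSpace ℝ (Fin D))).norm
  simp only [Complex.norm_exp] at h
  convert h using 2 with v
  simp [neg_mul]
  left; norm_cast

lemma stmt16_gauss_integral (D : ℕ) {b : ℝ} (hb : 0 < b) :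
    ∫ v : EuclideanSpace ℝ (Fin D), rexp (-b * ‖v‖^2) = (π / b) ^ ((D:ℝ)/2) := by
  rw [GaussianFourier.integral_rexp_neg_mul_sq_norm hb]
  simp [finrank_euclideanSpace_fin]

lemma stmt16_global_bound (D : ℕ) (l : ℝ) (hl0 : 0 < l)
    (f : EuclideanSpace ℝ (Fin D) → ℝ) (hfc : Continuous f)
    (hdecay : ∃ c : ℝ, ∀ x, 1 ≤ ‖x‖ → |f x| ≤ c / (1 + ‖x‖ ^ l)) :
    ∃ C : ℝ, 0 < C ∧ ∀ z, |f z| ≤ C / (1 + ‖z‖) ^ l := by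
  obtain ⟨c, hc⟩ := hdecay
  obtain ⟨M, hM⟩ := (isCompact_closedBall (0 : EuclideanSpace ℝ (Fin D)) 1).exists_bound_of_continuousOn
    hfc.continuousOn
  set S : ℝ := max c 0 + max M 0 + 1 with hS
  have hSpos : 0 < S := by positivity
  have h2l : (0:ℝ) < 2 ^ l := rpow_pos_of_pos (by norm_num) l
  refine ⟨2 ^ l * S, by positivity, fun z => ?_⟩
  have hz0 : (0:ℝ) ≤ ‖z‖ := norm_nonneg z
  have hden : (0:ℝ) < (1 + ‖z‖) ^ l := rpow_pos_of_pos (by linarith) l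
  by_cases hz : 1 ≤ ‖z‖
  · have h1 : (0:ℝ) < 1 + ‖z‖ ^ l := by
      have := rpow_nonneg hz0 l; linarith
    have key : (1 + ‖z‖) ^ l ≤ 2 ^ l * (1 + ‖z‖ ^ l) := by
      calc (1 + ‖z‖) ^ l ≤ (2 * ‖z‖) ^ l :=
            rpow_le_rpow (by linarith) (by linarith) hl0.le
        _ = 2 ^ l * ‖z‖ ^ l := mul_rpow (by norm_num) hz0
        _ ≤ 2 ^ l * (1 + ‖z‖ ^ l) := by nlinarith [rpow_nonneg hz0 l]
    calc |f z| ≤ c / (1 + ‖z‖ ^ l) := hc z hz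
      _ ≤ max c 0 / (1 + ‖z‖ ^ l) := by gcongr; exact le_max_left c 0
      _ ≤ 2 ^ l * S / (1 + ‖z‖) ^ l := by
          rw [div_le_div_iff₀ h1 hden]
          have h3 : max c 0 * ((1 + ‖z‖) ^ l) ≤ max c 0 * (2 ^ l * (1 + ‖z‖ ^ l)) :=
            mul_le_mul_of_nonneg_left key (le_max_right c 0)
          have h4 : max c 0 ≤ S := by
            have := le_max_right M 0; simp only [hS]; linarith
          nlinarith [le_max_right c 0, h1.le, h2l.le]
  · push_neg at hz
    have hmem : z ∈ Metric.closedBall (0 : EuclideanSpace ℝ (Fin D)) 1 := by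
      simpa [Metric.mem_closedBall, dist_zero_right] using hz.le
    have hfz : |f z| ≤ max M 0 := le_trans (hM z hmem) (le_max_left M 0)
    have key : (1 + ‖z‖) ^ l ≤ 2 ^ l :=
      rpow_le_rpow (by linarith) (by linarith) hl0.le
    have h8 : |f z| * (1 + ‖z‖) ^ l ≤ 2 ^ l * S := by
      have h9 : |f z| * (1 + ‖z‖) ^ l ≤ max M 0 * 2 ^ l :=
        mul_le_mul hfz key hden.le (le_max_right M 0)
      have h10 : max M 0 ≤ S := by
        have := le_max_right c 0; simp only [hS]; linarith
      nlinarith [h2l.le, le_max_right M 0]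
    exact (le_div_iff₀ hden).2 h8

set_option maxHeartbeats 1000000 in
/-- if f is continuous with |f(x)| ≤ c/(1+|x|^l) for |x| ≥ 1 and l > D,
then f ∈ L¹ ∩ L², and the heat-kernel convolution f ∗ G_ν(t,·) retains polynomial
decay of order l - μ for any μ ∈ (0,1), uniformly in ν, t ∈ (0,1]. -/
theorem stmt16 (D : ℕ) (hD : 1 ≤ D) (l : ℝ) (hl : (D : ℝ) < l)
    (f : EuclideanSpace ℝ (Fin D) → ℝ) (hfc : Continuous f)
    (hdecay : ∃ c : ℝ, ∀ x, 1 ≤ ‖x‖ → |f x| ≤ c / (1 + ‖x‖ ^ l)) :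
    Integrable f ∧ MemLp f 2 (volume) ∧
    ∀ μ ∈ Set.Ioo (0:ℝ) 1, ∃ c' > 0,
      ∀ ν ∈ Set.Ioc (0:ℝ) 1, ∀ t ∈ Set.Ioc (0:ℝ) 1,
        ∀ x : EuclideanSpace ℝ (Fin D), 1 ≤ ‖x‖ →
          |∫ y, f (x - y) *
              ((4 * π * ν * t) ^ (-(D : ℝ) / 2) * Real.exp (-‖y‖ ^ 2 / (4 * ν * t)))|
            ≤ c' / (1 + ‖x‖ ^ (l - μ)) := by
  have hD1 : (1:ℝ) ≤ (D:ℝ) := by exact_mod_cast hD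
  have hl0 : 0 < l := by linarith
  obtain ⟨C, hC, hCf⟩ := stmt16_global_bound D l hl0 f hfc hdecay
  have hb1 : ∀ z : EuclideanSpace ℝ (Fin D), (0:ℝ) < 1 + ‖z‖ := fun z => by
    have := norm_nonneg z; linarith
  have hone_le : ∀ z : EuclideanSpace ℝ (Fin D), (1:ℝ) ≤ (1 + ‖z‖) ^ l := fun z => by
    have h01 : (1:ℝ) ≤ 1 + ‖z‖ := by have := norm_nonneg z; linarith
    have := rpow_le_rpow (by norm_num : (0:ℝ) ≤ 1) h01 hl0.le
    simpa using this
  have hCf' : ∀ z, |f z| ≤ C * (1 + ‖z‖) ^ (-l) := fun z => by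
    rw [rpow_neg (hb1 z).le, ← div_eq_mul_inv]; exact hCf z
  have hfin : ((Module.finrank ℝ (EuclideanSpace ℝ (Fin D)) : ℝ)) < l := by
    rw [finrank_euclideanSpace_fin]; exact hl
  have hint1 : Integrable f := by
    refine ((integrable_one_add_norm (E := EuclideanSpace ℝ (Fin D)) hfin).const_mul C).mono'
      hfc.aestronglyMeasurable (ae_of_all _ fun z => ?_)
    simpa [Real.norm_eq_abs] using hCf' z
  have hfC : ∀ z, |f z| ≤ C := fun z =>
    (hCf z).trans (div_le_self hC.le (hone_le z))
  refine ⟨hint1, ?_, ?_⟩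
  · rw [memLp_two_iff_integrable_sq hfc.aestronglyMeasurable]
    refine (hint1.abs.const_mul C).mono' (hfc.pow 2).aestronglyMeasurable
      (ae_of_all _ fun z => ?_)
    rw [Real.norm_eq_abs, abs_pow, sq]
    exact mul_le_mul_of_nonneg_right (hfC z) (abs_nonneg _)
  · intro μ hμ
    obtain ⟨hμ0, hμ1⟩ := hμ
    refine ⟨C * rexp (2 * l ^ 2) * 2 ^ ((D:ℝ)/2) * 2, by positivity, ?_⟩
    intro ν hν t ht x hx
    obtain ⟨hν0, hν1⟩ := hν
    obtain ⟨ht0, ht1⟩ := ht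
    have hνt0 : 0 < ν * t := mul_pos hν0 ht0
    have hνt1 : ν * t ≤ 1 := by nlinarith
    have hs0 : (0:ℝ) < 4 * ν * t := by nlinarith
    set b : ℝ := 1 / (4 * ν * t) - 1 / 8 with hbdef
    have hbpos : 0 < b := by
      have h4 : 1 / (4 * ν * t) ≥ 1 / 4 := by
        rw [ge_iff_le, div_le_div_iff₀ (by norm_num) hs0]; nlinarith
      rw [hbdef]; linarith
    have hP0 : (0:ℝ) < (4 * π * ν * t) ^ (-(D:ℝ)/2) :=
      rpow_pos_of_pos (by positivity) _
    set K : ℝ := C * rexp (2 * l ^ 2) * (1 + ‖x‖) ^ (-l) * (4 * π * ν * t) ^ (-(D:ℝ)/2) with hK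
    have hKpos : 0 < K := by
      rw [hK]; positivity
    -- pointwise bound
    have hpt : ∀ y : EuclideanSpace ℝ (Fin D),
        ‖f (x - y) * ((4 * π * ν * t) ^ (-(D:ℝ)/2) * rexp (-‖y‖ ^ 2 / (4 * ν * t)))‖
          ≤ K * rexp (-b * ‖y‖ ^ 2) := by
      intro y
      have hy0 : (0:ℝ) ≤ ‖y‖ := norm_nonneg y
      have hE0 : (0:ℝ) < rexp (-‖y‖ ^ 2 / (4 * ν * t)) := exp_pos _
      have h1 : |f (x - y)| ≤ C * (1 + ‖y‖) ^ l / (1 + ‖x‖) ^ l := by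
        have htri : ‖x‖ ≤ ‖x - y‖ + ‖y‖ := by
          have := norm_add_le (x - y) y
          simpa using this
        have hkey : 1 + ‖x‖ ≤ (1 + ‖x - y‖) * (1 + ‖y‖) := by
          nlinarith [norm_nonneg (x - y), norm_nonneg y, mul_nonneg (norm_nonneg (x-y)) (norm_nonneg y)]
        have hkey2 : (1 + ‖x‖) ^ l ≤ (1 + ‖x - y‖) ^ l * (1 + ‖y‖) ^ l := by
          rw [← mul_rpow (hb1 (x-y)).le (hb1 y).le]
          exact rpow_le_rpow (hb1 x).le hkey hl0.le
        have hdx : (0:ℝ) < (1 + ‖x - y‖) ^ l := rpow_pos_of_pos (hb1 _) l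
        have hdxx : (0:ℝ) < (1 + ‖x‖) ^ l := rpow_pos_of_pos (hb1 _) l
        calc |f (x - y)| ≤ C / (1 + ‖x - y‖) ^ l := hCf (x - y)
          _ ≤ C * (1 + ‖y‖) ^ l / (1 + ‖x‖) ^ l := by
              rw [div_le_div_iff₀ hdx hdxx]
              calc C * (1 + ‖x‖) ^ l ≤ C * ((1 + ‖x - y‖) ^ l * (1 + ‖y‖) ^ l) :=
                    mul_le_mul_of_nonneg_left hkey2 hC.le
                _ = C * (1 + ‖y‖) ^ l * (1 + ‖x - y‖) ^ l := by ring
      have h2 : (1 + ‖y‖) ^ l ≤ rexp (2 * l ^ 2) * rexp (‖y‖ ^ 2 / 8) := by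
        calc (1 + ‖y‖) ^ l ≤ (rexp ‖y‖) ^ l := by
              apply rpow_le_rpow (hb1 y).le _ hl0.le
              have := Real.add_one_le_exp ‖y‖
              linarith
          _ = rexp (‖y‖ * l) := (Real.exp_mul ‖y‖ l).symm
          _ ≤ rexp (2 * l ^ 2 + ‖y‖ ^ 2 / 8) := by
              apply Real.exp_le_exp.2
              nlinarith [sq_nonneg (‖y‖ - 4 * l)]
          _ = rexp (2 * l ^ 2) * rexp (‖y‖ ^ 2 / 8) := Real.exp_add _ _
      have h3 : rexp (‖y‖ ^ 2 / 8) * rexp (-‖y‖ ^ 2 / (4 * ν * t)) = rexp (-b * ‖y‖ ^ 2) := by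
        rw [← Real.exp_add]
        congr 1
        rw [hbdef]
        field_simp
        ring
      have hdxx : (0:ℝ) < (1 + ‖x‖) ^ l := rpow_pos_of_pos (hb1 _) l
      calc ‖f (x - y) * ((4 * π * ν * t) ^ (-(D:ℝ)/2) * rexp (-‖y‖ ^ 2 / (4 * ν * t)))‖
          = |f (x - y)| * ((4 * π * ν * t) ^ (-(D:ℝ)/2) * rexp (-‖y‖ ^ 2 / (4 * ν * t))) := by
            rw [Real.norm_eq_abs, abs_mul]
            congr 1
            exact abs_of_pos (by positivity)
        _ ≤ (C * (1 + ‖y‖) ^ l / (1 + ‖x‖) ^ l) *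
              ((4 * π * ν * t) ^ (-(D:ℝ)/2) * rexp (-‖y‖ ^ 2 / (4 * ν * t))) :=
            mul_le_mul_of_nonneg_right h1 (by positivity)
        _ ≤ (C * (rexp (2 * l ^ 2) * rexp (‖y‖ ^ 2 / 8)) / (1 + ‖x‖) ^ l) *
              ((4 * π * ν * t) ^ (-(D:ℝ)/2) * rexp (-‖y‖ ^ 2 / (4 * ν * t))) := by
            gcongr
        _ = K * rexp (-b * ‖y‖ ^ 2) := by
            rw [hK, ← h3, rpow_neg (hb1 x).le]
            field_simp
    -- integrability of the dominating function
    have hintg : Integrable (fun y : EuclideanSpace ℝ (Fin D) => K * rexp (-b * ‖y‖ ^ 2)) :=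
      (stmt16_gauss_integrable D hbpos).const_mul K
    have habs : |∫ y, f (x - y) *
          ((4 * π * ν * t) ^ (-(D:ℝ)/2) * rexp (-‖y‖ ^ 2 / (4 * ν * t)))|
        ≤ K * (π / b) ^ ((D:ℝ)/2) := by
      calc |∫ y, f (x - y) * ((4 * π * ν * t) ^ (-(D:ℝ)/2) * rexp (-‖y‖ ^ 2 / (4 * ν * t)))|
          ≤ ∫ y, ‖f (x - y) * ((4 * π * ν * t) ^ (-(D:ℝ)/2) * rexp (-‖y‖ ^ 2 / (4 * ν * t)))‖ := by
            rw [← Real.norm_eq_abs]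
            exact norm_integral_le_integral_norm _
        _ ≤ ∫ y, K * rexp (-b * ‖y‖ ^ 2) := by
            refine integral_mono_of_nonneg (ae_of_all _ fun y => norm_nonneg _) hintg
              (ae_of_all _ hpt)
        _ = K * ∫ y : EuclideanSpace ℝ (Fin D), rexp (-b * ‖y‖ ^ 2) := integral_const_mul _ _
        _ = K * (π / b) ^ ((D:ℝ)/2) := by rw [stmt16_gauss_integral D hbpos]
    -- estimate the constant
    have hprod : (4 * π * ν * t) ^ (-(D:ℝ)/2) * (π / b) ^ ((D:ℝ)/2) ≤ 2 ^ ((D:ℝ)/2) := by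
      have h4pi : (0:ℝ) < 4 * π * ν * t := by positivity
      have heq : (4 * π * ν * t) ^ (-(D:ℝ)/2) = ((4 * π * ν * t)⁻¹) ^ ((D:ℝ)/2) := by
        rw [neg_div, rpow_neg h4pi.le, ← inv_rpow h4pi.le]
      rw [heq, ← mul_rpow (by positivity) (by positivity)]
      apply rpow_le_rpow (by positivity) _ (by positivity)
      have hb8 : b * (4 * ν * t) = 1 - ν * t / 2 := by
        rw [hbdef]; field_simp; ring
      have hpi : π ≠ 0 := pi_ne_zero
      have hrw : (4 * π * ν * t)⁻¹ * (π / b) = 1 / (b * (4 * ν * t)) := by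
        field_simp
      rw [hrw, hb8, div_le_iff₀ (by nlinarith)]
      nlinarith
    have hfinal : (1 + ‖x‖) ^ (-l) ≤ 2 / (1 + ‖x‖ ^ (l - μ)) := by
      have hlx : ‖x‖ ^ (l - μ) ≤ (1 + ‖x‖) ^ l := by
        calc ‖x‖ ^ (l - μ) ≤ ‖x‖ ^ l := rpow_le_rpow_of_exponent_le hx (by linarith)
          _ ≤ (1 + ‖x‖) ^ l := rpow_le_rpow (norm_nonneg x) (by linarith) hl0.le
      have hpos1 : (0:ℝ) < 1 + ‖x‖ ^ (l - μ) := by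
        have := rpow_nonneg (norm_nonneg x) (l - μ); linarith
      have hdxx : (0:ℝ) < (1 + ‖x‖) ^ l := rpow_pos_of_pos (hb1 _) l
      rw [rpow_neg (hb1 x).le, inv_eq_one_div, div_le_div_iff₀ hdxx hpos1]
      nlinarith [hone_le x]
    -- conclude
    have hchain : K * (π / b) ^ ((D:ℝ)/2)
        ≤ C * rexp (2 * l ^ 2) * 2 ^ ((D:ℝ)/2) * 2 / (1 + ‖x‖ ^ (l - μ)) := by
      have hpos1 : (0:ℝ) < 1 + ‖x‖ ^ (l - μ) := by
        have := rpow_nonneg (norm_nonneg x) (l - μ); linarith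
      have step1 : K * (π / b) ^ ((D:ℝ)/2)
          = (C * rexp (2 * l ^ 2)) * (1 + ‖x‖) ^ (-l) *
            ((4 * π * ν * t) ^ (-(D:ℝ)/2) * (π / b) ^ ((D:ℝ)/2)) := by
        rw [hK]; ring
      rw [step1]
      calc (C * rexp (2 * l ^ 2)) * (1 + ‖x‖) ^ (-l) *
            ((4 * π * ν * t) ^ (-(D:ℝ)/2) * (π / b) ^ ((D:ℝ)/2))
          ≤ (C * rexp (2 * l ^ 2)) * (2 / (1 + ‖x‖ ^ (l - μ))) * (2 ^ ((D:ℝ)/2)) := by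
            have h0 : (0:ℝ) ≤ (1 + ‖x‖) ^ (-l) := (rpow_pos_of_pos (hb1 x) _).le
            apply mul_le_mul (mul_le_mul_of_nonneg_left hfinal (by positivity)) hprod
              (by positivity) (by positivity)
        _ = C * rexp (2 * l ^ 2) * 2 ^ ((D:ℝ)/2) * 2 / (1 + ‖x‖ ^ (l - μ)) := by
            rw [div_eq_mul_inv, div_eq_mul_inv]
            ring
    exact habs.trans hchain
end
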